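/- For every integer $i \ge 1$, the subgroup $\mathcal{O}_{E,i}^\times$ has finite index in $\mathcal{O}_E^\times$ equal to $p^{\,i}$. -/

import Mathlib

open scoped Classical

namespace ArakawaQuad

variable (p : ℕ) [Fact p.Prime]
variable (E : Type*) [Field E] [Algebra ℚ_[p] E] [Algebra ℤ_[p] E]
  [IsScalarTower ℤ_[p] ℚ_[p] E]

/-- Membership in `𝒪_{E,i} = ℤ_p + p^i 𝒪_E`, where `𝒪_E` is the ring of integers
(the integral closure of `ℤ_p` in `E`). -/
def MemOEi (i : ℕ) (z : E) : Prop :=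
  ∃ a : ℤ_[p], ∃ w ∈ integralClosure ℤ_[p] E, z = algebraMap ℤ_[p] E a + (p : E) ^ i * w

/-- Membership of a unit `u ∈ Eˣ` in `𝒪_{E,i}^× = 𝒪_{E,i} ∩ 𝒪_E^×`. -/
def MemOEiUnits (i : ℕ) (u : Eˣ) : Prop :=
  MemOEi p E i ↑u ∧ (↑u : E) ∈ integralClosure ℤ_[p] E ∧
    ((↑u⁻¹ : E) ∈ integralClosure ℤ_[p] E)

/-- `χ : E^× → ℂ^×` is trivial on `ℚ_p^×`. -/
def TrivialOnQp (χ : Eˣ →* ℂˣ) : Prop :=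
  ∀ t : ℚ_[p]ˣ, χ (Units.map (algebraMap ℚ_[p] E).toMonoidHom t) = 1

/-- `χ` has conductor exponent `n`: it is trivial on `𝒪_{E,n}^×` and, when `n > 0`,
nontrivial on `𝒪_{E,n-1}^×`. -/
def CondExp (χ : Eˣ →* ℂˣ) (n : ℕ) : Prop :=
  (∀ u : Eˣ, MemOEiUnits p E n u → χ u = 1) ∧
  (0 < n → ∃ u : Eˣ, MemOEiUnits p E (n - 1) u ∧ χ u ≠ 1)

/-- The value of `χ : E^× → ℂ^×` at an element of `E`, with junk value `0` at `0`. -/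
noncomputable def chiV {F : Type*} [Field F] (χ : Fˣ →* ℂˣ) (z : F) : ℂ :=
  if h : z ≠ 0 then (χ (Units.mk0 z h) : ℂ) else 0

/-- `E` is an unramified quadratic extension of `ℚ_p`: it has degree `2` and the
maximal ideal of its ring of integers `𝒪_E` is `p 𝒪_E` (an element of `𝒪_E` is a
unit of `𝒪_E` if and only if it does not lie in `p 𝒪_E`). -/
def Unramified : Prop :=
  Module.finrank ℚ_[p] E = 2 ∧
  ∀ z ∈ integralClosure ℤ_[p] E,
    ((∃ w ∈ integralClosure ℤ_[p] E, z * w = 1) ↔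
      ¬ ∃ w ∈ integralClosure ℤ_[p] E, z = (p : E) * w)

/-- `E` is a ramified quadratic extension of `ℚ_p` with maximal ideal `𝔭 = θ 𝒪_E`
satisfying `𝔭² = p 𝒪_E`: it has degree `2`, `θ ∈ 𝒪_E` generates the maximal ideal
(an element of `𝒪_E` is a unit of `𝒪_E` iff it is not in `θ 𝒪_E`), and
`θ² = p u` for a unit `u` of `𝒪_E`. -/
def Ramified (θ : E) : Prop :=
  Module.finrank ℚ_[p] E = 2 ∧
  θ ∈ integralClosure ℤ_[p] E ∧
  (∀ z ∈ integralClosure ℤ_[p] E,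
    ((∃ w ∈ integralClosure ℤ_[p] E, z * w = 1) ↔
      ¬ ∃ w ∈ integralClosure ℤ_[p] E, z = θ * w)) ∧
  (∃ u ∈ integralClosure ℤ_[p] E,
    (∃ v ∈ integralClosure ℤ_[p] E, u * v = 1) ∧ θ ^ 2 = (p : E) * u)

/-- `{1, θ}` is a `ℤ_p`-basis of the ring of integers `𝒪_E`. -/
def IsIntBasis (θ : E) : Prop :=
  θ ∈ integralClosure ℤ_[p] E ∧
  ∀ z ∈ integralClosure ℤ_[p] E, ∃! ab : ℤ_[p] × ℤ_[p],
    z = algebraMap ℤ_[p] E ab.1 + algebraMap ℤ_[p] E ab.2 * θ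

/-- `x` lies in the double coset `ℚ_p^× y 𝒪_{E,i}^×` inside `E^×`. -/
def InCoset (i : ℕ) (y x : E) : Prop :=
  ∃ t : ℚ_[p]ˣ, ∃ u : Eˣ, MemOEiUnits p E i u ∧
    x = algebraMap ℚ_[p] E ↑t * y * ↑u

/-- The unit group `𝒪_E^×`, as a subgroup of `E^×`. -/
def OEUnits : Subgroup Eˣ where
  carrier := {u | (↑u : E) ∈ integralClosure ℤ_[p] E ∧
    ((↑u⁻¹ : E) ∈ integralClosure ℤ_[p] E)}
  one_mem' := ⟨by simpa using (integralClosure ℤ_[p] E).one_mem,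
    by simpa using (integralClosure ℤ_[p] E).one_mem⟩
  mul_mem' := by
    rintro a b ⟨ha1, ha2⟩ ⟨hb1, hb2⟩
    refine ⟨?_, ?_⟩
    · simpa [Units.val_mul] using mul_mem ha1 hb1
    · simpa [Units.val_mul, mul_inv_rev] using mul_mem hb2 ha2
  inv_mem' := by
    rintro a ⟨h1, h2⟩
    exact ⟨h2, by simpa using h1⟩

end ArakawaQuad

open ArakawaQuad

/-- **Lemma 3.9** (ramified prime case, index form). Let `E/ℚ_p` be a ramified
quadratic extension with maximal ideal `𝔭 = θ𝒪_E` satisfying `𝔭² = p𝒪_E`. For every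
integer `i ≥ 1`, the subgroup `𝒪_{E,i}^× = 𝒪_{E,i} ∩ 𝒪_E^×` has finite index in
`𝒪_E^×` equal to `p^i`. -/
theorem lemma_3_9 (p : ℕ) [Fact p.Prime]
    (E : Type*) [Field E] [Algebra ℚ_[p] E] [Algebra ℤ_[p] E]
    [IsScalarTower ℤ_[p] ℚ_[p] E]
    (θ : E) (hE : Ramified p E θ) (i : ℕ) (hi : 1 ≤ i) :
    ∃ H : Subgroup Eˣ,
      (∀ u : Eˣ, u ∈ H ↔ (MemOEi p E i ↑u ∧ u ∈ OEUnits p E)) ∧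
      H.relIndex (OEUnits p E) = p ^ i := by
  classical
  obtain ⟨hdim, hθR, hcrit, u, huR, ⟨v, hvR, huv⟩, hθ2⟩ := hE
  have hp1 : (1:ℝ) < (p:ℝ) := by exact_mod_cast (Fact.out : p.Prime).one_lt
  have hppos : (p:ℝ) ≠ 0 := by positivity
  have hpQ : ((p:ℚ_[p])) ≠ 0 := by exact_mod_cast (Fact.out : p.Prime).ne_zero
  have hinjQ : Function.Injective (algebraMap ℚ_[p] E) := (algebraMap ℚ_[p] E).injective
  have hpE : (p:E) ≠ 0 := by
    have h1 : (p:E) = algebraMap ℚ_[p] E (p:ℚ_[p]) := by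
      rw [map_natCast]
    rw [h1]
    intro h
    exact hpQ (hinjQ (by simpa using h))
  have hθ0 : θ ≠ 0 := by
    intro h
    have h2 : (p:E) * u = 0 := by rw [← hθ2, h]; ring
    rcases mul_eq_zero.mp h2 with h3 | h3
    · exact hpE h3
    · rw [h3, zero_mul] at huv; exact one_ne_zero huv.symm
  have hθnu : ¬ ∃ w ∈ integralClosure ℤ_[p] E, θ * w = 1 := by
    intro h
    exact ((hcrit θ hθR).mp h) ⟨1, Subalgebra.one_mem _, (mul_one θ).symm⟩
  have hpfac : (p:E) = θ * (θ * v) := by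
    have h1 : (p:E) * (u * v) = (p:E) := by rw [huv, mul_one]
    calc (p:E) = (p:E) * (u * v) := h1.symm
      _ = θ^2 * v := by rw [← mul_assoc, ← hθ2]
      _ = θ * (θ * v) := by ring
  have hZR : ∀ a : ℤ_[p], algebraMap ℤ_[p] E a ∈ integralClosure ℤ_[p] E :=
    fun a => Subalgebra.algebraMap_mem _ a
  have hZQcast : ∀ a : ℤ_[p], algebraMap ℤ_[p] E a = algebraMap ℚ_[p] E (a : ℚ_[p]) := by
    intro a
    rw [IsScalarTower.algebraMap_apply ℤ_[p] ℚ_[p] E a, PadicInt.algebraMap_apply]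
  have hθnotp : ¬ ∃ w ∈ integralClosure ℤ_[p] E, θ = (p:E) * w := by
    rintro ⟨w, hw, hwe⟩
    apply hθnu
    refine ⟨v * w, mul_mem hvR hw, ?_⟩
    have h1 : θ * 1 = θ * (θ * (v * w)) := by
      calc θ * 1 = θ := mul_one θ
        _ = (p:E) * w := hwe
        _ = θ * (θ * (v * w)) := by rw [hpfac]; ring
    have h2 := mul_left_cancel₀ hθ0 h1
    exact h2.symm
  -- θ is not a ℚ_p-multiple of 1
  have hθnotQ : ∀ c : ℚ_[p], c • (1:E) ≠ θ := by
    intro c hc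
    have hc' : algebraMap ℚ_[p] E c = θ := by rwa [Algebra.smul_def, mul_one] at hc
    have hc0 : c ≠ 0 := by rintro rfl; rw [map_zero] at hc'; exact hθ0 hc'.symm
    by_cases hc1 : ‖c‖ ≤ 1
    · set c₀ : ℤ_[p] := ⟨c, hc1⟩ with hc₀def
      have hcoe : (c₀ : ℚ_[p]) = c := rfl
      have hQc₀ : algebraMap ℤ_[p] E c₀ = θ := by rw [hZQcast, hcoe, hc']
      by_cases hcu : ‖c₀‖ = 1
      · have hu₀ : IsUnit c₀ := PadicInt.isUnit_iff.mpr hcu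
        obtain ⟨d, hd⟩ := hu₀.exists_right_inv
        apply hθnu
        refine ⟨algebraMap ℤ_[p] E d, hZR d, ?_⟩
        rw [← hQc₀, ← map_mul, hd, map_one]
      · have hlt : ‖c₀‖ < 1 := lt_of_le_of_ne c₀.2 hcu
        obtain ⟨d, hd⟩ := (PadicInt.norm_lt_one_iff_dvd c₀).mp hlt
        apply hθnotp
        refine ⟨algebraMap ℤ_[p] E d, hZR d, ?_⟩
        rw [← hQc₀, hd, map_mul, map_natCast]
    · push_neg at hc1
      have hcinv : ‖c⁻¹‖ ≤ 1 := by
        rw [norm_inv]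
        exact inv_le_one_of_one_le₀ hc1.le
      apply hθnu
      refine ⟨algebraMap ℤ_[p] E ⟨c⁻¹, hcinv⟩, hZR _, ?_⟩
      erw [hZQcast, ← hc', ← map_mul]
      show algebraMap ℚ_[p] E (c * c⁻¹) = 1
      rw [mul_inv_cancel₀ hc0, map_one]
  have hLI : LinearIndependent ℚ_[p] ![(1:E), θ] :=
    (LinearIndependent.pair_iff' one_ne_zero).mpr hθnotQ
  have hcard : Fintype.card (Fin 2) = Module.finrank ℚ_[p] E := by
    simp [hdim]
  let B := basisOfLinearIndependentOfCardEqFinrank hLI hcard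
  have hspan : ∀ z : E, ∃ α β : ℚ_[p],
      z = algebraMap ℚ_[p] E α + algebraMap ℚ_[p] E β * θ := by
    intro z
    refine ⟨B.repr z 0, B.repr z 1, ?_⟩
    have h := B.sum_repr z
    rw [Fin.sum_univ_two] at h
    have hB0 : B 0 = 1 := by
      show (basisOfLinearIndependentOfCardEqFinrank hLI hcard) 0 = 1
      rw [coe_basisOfLinearIndependentOfCardEqFinrank]
      rfl
    have hB1 : B 1 = θ := by
      show (basisOfLinearIndependentOfCardEqFinrank hLI hcard) 1 = θ
      rw [coe_basisOfLinearIndependentOfCardEqFinrank]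
      rfl
    rw [hB0, hB1, Algebra.smul_def, Algebra.smul_def, mul_one] at h
    exact h.symm
  have hUQ : ∀ α β γ δ : ℚ_[p],
      algebraMap ℚ_[p] E α + algebraMap ℚ_[p] E β * θ =
        algebraMap ℚ_[p] E γ + algebraMap ℚ_[p] E δ * θ → α = γ ∧ β = δ := by
    intro α β γ δ h
    have h2 := LinearIndependent.pair_iff.mp hLI (α - γ) (β - δ) ?_
    · exact ⟨sub_eq_zero.mp h2.1, sub_eq_zero.mp h2.2⟩
    · rw [Algebra.smul_def, Algebra.smul_def, mul_one, map_sub, map_sub]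
      linear_combination h
  have hcoeZ : Function.Injective (fun a : ℤ_[p] => (a : ℚ_[p])) :=
    Subtype.coe_injective
  have hUniqZ : ∀ a b c d : ℤ_[p],
      algebraMap ℤ_[p] E a + algebraMap ℤ_[p] E b * θ =
        algebraMap ℤ_[p] E c + algebraMap ℤ_[p] E d * θ → a = c ∧ b = d := by
    intro a b c d h
    rw [hZQcast a, hZQcast b, hZQcast c, hZQcast d] at h
    obtain ⟨h1, h2⟩ := hUQ _ _ _ _ h
    exact ⟨hcoeZ h1, hcoeZ h2⟩
  -- descent
  have hdesc : ∀ k : ℕ, ∀ z ∈ integralClosure ℤ_[p] E, ∀ a b : ℤ_[p],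
      (p:E)^k * z = algebraMap ℤ_[p] E a + algebraMap ℤ_[p] E b * θ →
      ∃ a' b' : ℤ_[p], z = algebraMap ℤ_[p] E a' + algebraMap ℤ_[p] E b' * θ := by
    intro k
    induction k with
    | zero => intro z hz a b h; exact ⟨a, b, by simpa using h⟩
    | succ k ih =>
      intro z hz a b h
      have hzk : (p:E)^k * z ∈ integralClosure ℤ_[p] E := by
        refine mul_mem (pow_mem ?_ k) hz
        exact Subalgebra.natCast_mem _ p
      have hnotunit : ∀ x : ℤ_[p], ¬ IsUnit x → (p:ℤ_[p]) ∣ x := by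
        intro x hx
        rw [PadicInt.isUnit_iff] at hx
        exact (PadicInt.norm_lt_one_iff_dvd x).mp (lt_of_le_of_ne x.2 hx)
      have hpa : (p:ℤ_[p]) ∣ a := by
        apply hnotunit
        intro hua
        have h1 : algebraMap ℤ_[p] E a =
            θ * ((θ * v) * ((p:E)^k * z) - algebraMap ℤ_[p] E b) := by
          linear_combination ((p:E)^k * z) * hpfac - h
        have hmem := sub_mem (mul_mem (mul_mem hθR hvR) hzk) (hZR b)
        obtain ⟨a', ha'⟩ := hua.exists_right_inv
        have hinv' : ∃ w ∈ integralClosure ℤ_[p] E, algebraMap ℤ_[p] E a * w = 1 :=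
          ⟨algebraMap ℤ_[p] E a', hZR a', by rw [← map_mul, ha', map_one]⟩
        exact (hcrit _ (hZR a)).mp hinv' ⟨_, hmem, h1⟩
      obtain ⟨a₀, rfl⟩ := hpa
      have hQpa : algebraMap ℤ_[p] E ((p:ℤ_[p]) * a₀) = (p:E) * algebraMap ℤ_[p] E a₀ := by
        rw [map_mul, map_natCast]
      have hpb : (p:ℤ_[p]) ∣ b := by
        apply hnotunit
        intro hub
        obtain ⟨b', hb'⟩ := hub.exists_right_inv
        apply hθnotp
        refine ⟨algebraMap ℤ_[p] E b' * ((p:E)^k * z - algebraMap ℤ_[p] E a₀),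
          mul_mem (hZR b') (sub_mem hzk (hZR a₀)), ?_⟩
        have hb'E : algebraMap ℤ_[p] E b * algebraMap ℤ_[p] E b' = 1 := by
          rw [← map_mul, hb', map_one]
        linear_combination (-(algebraMap ℤ_[p] E b')) * h - (algebraMap ℤ_[p] E b') * hQpa -
          θ * hb'E
      obtain ⟨b₀, rfl⟩ := hpb
      have hQpb : algebraMap ℤ_[p] E ((p:ℤ_[p]) * b₀) = (p:E) * algebraMap ℤ_[p] E b₀ := by
        rw [map_mul, map_natCast]
      have hcancel : (p:E)^k * z = algebraMap ℤ_[p] E a₀ + algebraMap ℤ_[p] E b₀ * θ := by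
        apply mul_left_cancel₀ hpE
        rw [hQpa, hQpb] at h
        linear_combination h
      exact ih z hz a₀ b₀ hcancel
  -- integral representation
  have hRep : ∀ z ∈ integralClosure ℤ_[p] E, ∃ a b : ℤ_[p],
      z = algebraMap ℤ_[p] E a + algebraMap ℤ_[p] E b * θ := by
    intro z hz
    obtain ⟨α, β, hαβ⟩ := hspan z
    obtain ⟨k₁, hk₁⟩ := pow_unbounded_of_one_lt ‖α‖ hp1
    obtain ⟨k₂, hk₂⟩ := pow_unbounded_of_one_lt ‖β‖ hp1
    set k := max k₁ k₂ with hk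
    have hkα : ‖α‖ ≤ (p:ℝ)^k :=
      hk₁.le.trans (pow_le_pow_right₀ hp1.le (le_max_left _ _))
    have hkβ : ‖β‖ ≤ (p:ℝ)^k :=
      hk₂.le.trans (pow_le_pow_right₀ hp1.le (le_max_right _ _))
    have hnorm : ∀ γ : ℚ_[p], ‖γ‖ ≤ (p:ℝ)^k → ‖(p:ℚ_[p])^k * γ‖ ≤ 1 := by
      intro γ hγ
      rw [norm_mul, norm_pow, Padic.norm_p]
      have h1 : ((p:ℝ)⁻¹)^k * ‖γ‖ ≤ ((p:ℝ)⁻¹)^k * (p:ℝ)^k :=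
        mul_le_mul_of_nonneg_left hγ (by positivity)
      calc ((p:ℝ)⁻¹)^k * ‖γ‖ ≤ ((p:ℝ)⁻¹)^k * (p:ℝ)^k := h1
        _ = 1 := by rw [← mul_pow, inv_mul_cancel₀ hppos, one_pow]
    refine hdesc k z hz ⟨(p:ℚ_[p])^k * α, hnorm α hkα⟩ ⟨(p:ℚ_[p])^k * β, hnorm β hkβ⟩ ?_
    erw [hZQcast, hZQcast]
    show (p:E)^k * z = algebraMap ℚ_[p] E ((p:ℚ_[p])^k * α) +
      algebraMap ℚ_[p] E ((p:ℚ_[p])^k * β) * θ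
    rw [hαβ, map_mul, map_mul, map_pow, map_natCast]
    ring
  -- coefficients of u
  obtain ⟨e, f, huef⟩ := hRep u huR
  -- multiplication rule
  have hmulC : ∀ a b c d : ℤ_[p],
      (algebraMap ℤ_[p] E a + algebraMap ℤ_[p] E b * θ) *
        (algebraMap ℤ_[p] E c + algebraMap ℤ_[p] E d * θ) =
      algebraMap ℤ_[p] E (a*c + b*d*(p:ℤ_[p])*e) +
        algebraMap ℤ_[p] E (a*d + b*c + b*d*(p:ℤ_[p])*f) * θ := by
    intro a b c d
    have hθθ : θ * θ = (p:E) * algebraMap ℤ_[p] E e +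
        ((p:E) * algebraMap ℤ_[p] E f) * θ := by
      have h1 : θ^2 = (p:E) * (algebraMap ℤ_[p] E e + algebraMap ℤ_[p] E f * θ) := by
        rw [hθ2, huef]
      linear_combination h1
    simp only [map_add, map_mul, map_natCast]
    linear_combination (algebraMap ℤ_[p] E b * algebraMap ℤ_[p] E d) * hθθ
  have hdvd_notunit : ∀ x : ℤ_[p], (p:ℤ_[p]) ∣ x → ¬ IsUnit x := by
    intro x hx hux
    rw [PadicInt.isUnit_iff] at hux
    exact absurd ((PadicInt.norm_lt_one_iff_dvd x).mpr hx) (by rw [hux]; exact lt_irrefl 1)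
  -- invertibility criterion via constant coefficient
  have hInv : ∀ a b : ℤ_[p], IsUnit a →
      ∃ w ∈ integralClosure ℤ_[p] E,
        (algebraMap ℤ_[p] E a + algebraMap ℤ_[p] E b * θ) * w = 1 := by
    intro a b ha
    apply (hcrit _ (add_mem (hZR a) (mul_mem (hZR b) hθR))).mpr
    rintro ⟨w, hw, hwe⟩
    obtain ⟨c, d, hcd⟩ := hRep w hw
    have hθw : θ * w = algebraMap ℤ_[p] E ((1:ℤ_[p])*d*(p:ℤ_[p])*e) +
        algebraMap ℤ_[p] E ((1:ℤ_[p])*c + (1:ℤ_[p])*d*(p:ℤ_[p])*f) * θ := by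
      have h0 := hmulC 0 1 c d
      simp only [map_zero, map_one, zero_add, one_mul, zero_mul, mul_zero, add_zero,
        zero_mul] at h0 ⊢
      rw [← hcd] at h0
      convert h0 using 2 <;> ring_nf
    rw [hθw] at hwe
    obtain ⟨h1, _⟩ := hUniqZ _ _ _ _ hwe
    exact hdvd_notunit a ⟨d*e, by rw [h1]; ring⟩ ha
  have hunit_coeff : ∀ a b : ℤ_[p],
      (∃ w ∈ integralClosure ℤ_[p] E,
        (algebraMap ℤ_[p] E a + algebraMap ℤ_[p] E b * θ) * w = 1) → IsUnit a := by
    intro a b hex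
    by_contra hna
    have hpa : (p:ℤ_[p]) ∣ a := by
      rw [PadicInt.isUnit_iff] at hna
      exact (PadicInt.norm_lt_one_iff_dvd a).mp (lt_of_le_of_ne a.2 hna)
    obtain ⟨a₀, rfl⟩ := hpa
    have hQ : algebraMap ℤ_[p] E ((p:ℤ_[p]) * a₀) = (p:E) * algebraMap ℤ_[p] E a₀ := by
      rw [map_mul, map_natCast]
    have hform : algebraMap ℤ_[p] E ((p:ℤ_[p]) * a₀) + algebraMap ℤ_[p] E b * θ =
        θ * ((θ * v) * algebraMap ℤ_[p] E a₀ + algebraMap ℤ_[p] E b) := by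
      rw [hQ, hpfac]; ring
    exact (hcrit _ (add_mem (hZR _) (mul_mem (hZR b) hθR))).mp hex
      ⟨_, add_mem (mul_mem (mul_mem hθR hvR) (hZR a₀)) (hZR b), hform⟩
  -- characterization of MemOEi by coefficients
  have hMemI : ∀ a b : ℤ_[p],
      MemOEi p E i (algebraMap ℤ_[p] E a + algebraMap ℤ_[p] E b * θ) ↔
        (p:ℤ_[p])^i ∣ b := by
    intro a b
    constructor
    · rintro ⟨c, w, hw, hweq⟩
      obtain ⟨s, t, hst⟩ := hRep w hw
      have h1 : algebraMap ℤ_[p] E a + algebraMap ℤ_[p] E b * θ =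
          algebraMap ℤ_[p] E (c + (p:ℤ_[p])^i * s) +
            algebraMap ℤ_[p] E ((p:ℤ_[p])^i * t) * θ := by
        rw [hweq, hst]
        simp only [map_add, map_mul, map_pow, map_natCast]
        ring
      obtain ⟨_, h2⟩ := hUniqZ _ _ _ _ h1
      exact ⟨t, h2⟩
    · rintro ⟨t, rfl⟩
      refine ⟨a, algebraMap ℤ_[p] E t * θ, mul_mem (hZR t) hθR, ?_⟩
      simp only [map_mul, map_pow, map_natCast]
      ring
  -- unit + p-divisible = unit
  have hUnitAdd : ∀ x y : ℤ_[p], IsUnit x → (p:ℤ_[p]) ∣ y → IsUnit (x + y) := by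
    intro x y hx hy
    rw [PadicInt.isUnit_iff] at hx ⊢
    have hy1 : ‖y‖ < 1 := (PadicInt.norm_lt_one_iff_dvd y).mpr hy
    have h1 : ‖x + y‖ ≤ 1 := (PadicInt.nonarchimedean x y).trans (max_le hx.le hy1.le)
    have h2 : (1:ℝ) ≤ ‖x + y‖ := by
      by_contra hcon
      push_neg at hcon
      have h3 : ‖x‖ ≤ max ‖x + y‖ ‖y‖ := by
        have := PadicInt.nonarchimedean (x + y) (-y)
        simpa using this
      rw [hx] at h3
      exact absurd (h3.trans_lt (max_lt hcon hy1)) (lt_irrefl 1)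
    linarith
  -- the subgroup
  have hone : MemOEi p E i ((1:Eˣ):E) ∧ ((1:Eˣ):E) ∈ integralClosure ℤ_[p] E ∧
      (((1:Eˣ)⁻¹:Eˣ):E) ∈ integralClosure ℤ_[p] E := by
    refine ⟨⟨1, 0, Subalgebra.zero_mem _, by simp⟩, by simpa using Subalgebra.one_mem _,
      by simpa using Subalgebra.one_mem _⟩
  have hmul' : ∀ g h : Eˣ,
      (MemOEi p E i (g:E) ∧ (g:E) ∈ integralClosure ℤ_[p] E ∧
        ((g⁻¹:Eˣ):E) ∈ integralClosure ℤ_[p] E) →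
      (MemOEi p E i (h:E) ∧ (h:E) ∈ integralClosure ℤ_[p] E ∧
        ((h⁻¹:Eˣ):E) ∈ integralClosure ℤ_[p] E) →
      (MemOEi p E i ((g*h:Eˣ):E) ∧ ((g*h:Eˣ):E) ∈ integralClosure ℤ_[p] E ∧
        (((g*h)⁻¹:Eˣ):E) ∈ integralClosure ℤ_[p] E) := by
    rintro g h ⟨⟨a, w, hw, hwe⟩, hg1, hg2⟩ ⟨⟨c, w', hw', hwe'⟩, hh1, hh2⟩
    refine ⟨⟨a*c, algebraMap ℤ_[p] E a * w' + algebraMap ℤ_[p] E c * w + (p:E)^i * (w * w'),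
      add_mem (add_mem (mul_mem (hZR a) hw') (mul_mem (hZR c) hw))
        (mul_mem (pow_mem (Subalgebra.natCast_mem (integralClosure ℤ_[p] E) p) i) (mul_mem hw hw')), ?_⟩, ?_, ?_⟩
    · rw [Units.val_mul, hwe, hwe', map_mul]
      ring
    · rw [Units.val_mul]; exact mul_mem hg1 hh1
    · rw [mul_inv_rev, Units.val_mul]; exact mul_mem hh2 hg2
  have hinv' : ∀ g : Eˣ,
      (MemOEi p E i (g:E) ∧ (g:E) ∈ integralClosure ℤ_[p] E ∧
        ((g⁻¹:Eˣ):E) ∈ integralClosure ℤ_[p] E) →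
      (MemOEi p E i ((g⁻¹:Eˣ):E) ∧ ((g⁻¹:Eˣ):E) ∈ integralClosure ℤ_[p] E ∧
        (((g⁻¹)⁻¹:Eˣ):E) ∈ integralClosure ℤ_[p] E) := by
    rintro g ⟨hgO, hg1, hg2⟩
    obtain ⟨x, y, hgxy⟩ := hRep (g:E) hg1
    obtain ⟨s, t, hgst⟩ := hRep ((g⁻¹:Eˣ):E) hg2
    have hx : IsUnit x := by
      apply hunit_coeff x y
      refine ⟨((g⁻¹:Eˣ):E), hg2, ?_⟩
      rw [← hgxy, ← Units.val_mul, mul_inv_cancel, Units.val_one]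
    have hy : (p:ℤ_[p])^i ∣ y := (hMemI x y).mp (by rwa [hgxy] at hgO)
    have hprod : algebraMap ℤ_[p] E (x*s + y*t*(p:ℤ_[p])*e) +
        algebraMap ℤ_[p] E (x*t + y*s + y*t*(p:ℤ_[p])*f) * θ =
        algebraMap ℤ_[p] E 1 + algebraMap ℤ_[p] E 0 * θ := by
      rw [← hmulC, ← hgxy, ← hgst, ← Units.val_mul, mul_inv_cancel, Units.val_one]
      simp
    obtain ⟨h1, h2⟩ := hUniqZ _ _ _ _ hprod
    have ht : (x + y*(p:ℤ_[p])*f) * t = -(y*s) := by linear_combination h2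
    have hxu : IsUnit (x + y*(p:ℤ_[p])*f) :=
      hUnitAdd x _ hx ⟨y*f, by ring⟩
    have hti : (p:ℤ_[p])^i ∣ t := by
      have hd : (p:ℤ_[p])^i ∣ (x + y*(p:ℤ_[p])*f) * t := by
        rw [ht]
        exact dvd_neg.mpr (hy.mul_right s)
      obtain ⟨c, hc⟩ := hxu.exists_left_inv
      have hteq : t = c * ((x + y*(p:ℤ_[p])*f) * t) := by
        rw [← mul_assoc, hc, one_mul]
      rw [hteq]
      exact Dvd.dvd.mul_left hd c
    refine ⟨?_, hg2, by simpa using hg1⟩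
    rw [hgst]
    exact (hMemI s t).mpr hti
  let Hc : Subgroup Eˣ :=
    { carrier := {g : Eˣ | MemOEi p E i (g:E) ∧ (g:E) ∈ integralClosure ℤ_[p] E ∧
        ((g⁻¹:Eˣ):E) ∈ integralClosure ℤ_[p] E}
      one_mem' := hone
      mul_mem' := fun {g h} hg hh => hmul' g h hg hh
      inv_mem' := fun {g} hg => hinv' g hg }
  have hHc_mem : ∀ g : Eˣ, g ∈ Hc ↔ (MemOEi p E i (g:E) ∧ (g:E) ∈ integralClosure ℤ_[p] E ∧
      ((g⁻¹:Eˣ):E) ∈ integralClosure ℤ_[p] E) := fun g => Iff.rfl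
  refine ⟨Hc, ?_, ?_⟩
  · intro g
    rw [hHc_mem g]
    constructor
    · rintro ⟨h1, h2, h3⟩; exact ⟨h1, h2, h3⟩
    · rintro ⟨h1, h2, h3⟩; exact ⟨h1, h2, h3⟩
  -- index computation
  · haveI hNZ : NeZero (p^i) := ⟨pow_ne_zero i (Fact.out : p.Prime).ne_zero⟩
    choose c1 c2 hc using hRep
    set φ : ℤ_[p] →+* ZMod (p^i) := PadicInt.toZModPow i with hφdef
    set K := OEUnits p E with hKdef
    have hKm : ∀ g : K, ((g:Eˣ):E) ∈ integralClosure ℤ_[p] E := fun g => g.2.1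
    have hKm' : ∀ g : K, (((g:Eˣ)⁻¹:Eˣ):E) ∈ integralClosure ℤ_[p] E := fun g => g.2.2
    have hxK : ∀ g : K, IsUnit (c1 _ (hKm g)) := by
      intro g
      apply hunit_coeff _ (c2 _ (hKm g))
      refine ⟨(((g:Eˣ)⁻¹:Eˣ):E), hKm' g, ?_⟩
      rw [← hc _ (hKm g), ← Units.val_mul, mul_inv_cancel, Units.val_one]
    let ψ : K → ZMod (p^i) := fun g => φ (c2 _ (hKm g)) * Ring.inverse (φ (c1 _ (hKm g)))
    have hval : ∀ g k : K, ((((g*k : K):Eˣ)):E) = ((g:Eˣ):E) * ((k:Eˣ):E) := fun g k => rfl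
    have hmulcoef : ∀ g k gk : K, ((gk:Eˣ):E) = ((g:Eˣ):E) * ((k:Eˣ):E) →
        c1 _ (hKm gk) = c1 _ (hKm g) * c1 _ (hKm k) +
          c2 _ (hKm g) * c2 _ (hKm k) * (p:ℤ_[p]) * e ∧
        c2 _ (hKm gk) = c1 _ (hKm g) * c2 _ (hKm k) + c2 _ (hKm g) * c1 _ (hKm k) +
          c2 _ (hKm g) * c2 _ (hKm k) * (p:ℤ_[p]) * f := by
      intro g k gk hgk
      refine hUniqZ _ _ _ _ ?_
      rw [← hc _ (hKm gk), hgk]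
      conv_lhs => rw [hc _ (hKm g), hc _ (hKm k)]
      exact hmulC _ _ _ _
    have hH'mem : ∀ k : K, k ∈ Hc.subgroupOf K ↔ (p:ℤ_[p])^i ∣ c2 _ (hKm k) := by
      intro k
      rw [Subgroup.mem_subgroupOf, hHc_mem]
      constructor
      · rintro ⟨h1, _, _⟩
        exact (hMemI _ _).mp (by rwa [hc _ (hKm k)] at h1)
      · intro hd
        exact ⟨by rw [hc _ (hKm k)]; exact (hMemI _ _).mpr hd, hKm k, hKm' k⟩
    have hφp : φ ((p:ℤ_[p])^i) = 0 := by
      have h1 : ((p:ℤ_[p])^i) = ((p^i : ℕ) : ℤ_[p]) := by push_cast; ring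
      rw [h1, map_natCast, ZMod.natCast_self]
    have hker : ∀ t : ℤ_[p], φ t = 0 ↔ (p:ℤ_[p])^i ∣ t := by
      intro t
      constructor
      · intro h
        have h2 : t ∈ RingHom.ker φ := h
        rw [hφdef, PadicInt.ker_toZModPow] at h2
        exact (Ideal.mem_span_singleton).mp h2
      · rintro ⟨t₀, rfl⟩
        rw [map_mul, hφp, zero_mul]
    have hdivlem : ∀ A C D : ZMod (p^i), IsUnit A → (C = D ↔ C * A = D * A) := by
      intro A C D hA
      constructor
      · intro h; rw [h]
      · intro h
        obtain ⟨B, hB⟩ := hA.exists_right_inv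
        have h2 := congrArg (· * B) h
        simpa [mul_assoc, hB] using h2
    have hkey : ∀ g g' : K, ψ g = ψ g' ↔
        φ (c2 _ (hKm g)) * φ (c1 _ (hKm g')) = φ (c2 _ (hKm g')) * φ (c1 _ (hKm g)) := by
      intro g g'
      have hxg := (hxK g).map φ
      have hxg' := (hxK g').map φ
      have e1 : ψ g * (φ (c1 _ (hKm g)) * φ (c1 _ (hKm g'))) =
          φ (c2 _ (hKm g)) * φ (c1 _ (hKm g')) := by
        show φ (c2 _ (hKm g)) * Ring.inverse (φ (c1 _ (hKm g))) * _ = _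
        rw [mul_assoc, ← mul_assoc (Ring.inverse _), Ring.inverse_mul_cancel _ hxg, one_mul]
      have e2 : ψ g' * (φ (c1 _ (hKm g)) * φ (c1 _ (hKm g'))) =
          φ (c2 _ (hKm g')) * φ (c1 _ (hKm g)) := by
        show φ (c2 _ (hKm g')) * Ring.inverse (φ (c1 _ (hKm g'))) * _ = _
        rw [mul_comm (φ (c1 _ (hKm g))) (φ (c1 _ (hKm g'))), mul_assoc,
          ← mul_assoc (Ring.inverse _), Ring.inverse_mul_cancel _ hxg', one_mul]
      rw [hdivlem _ (ψ g) (ψ g') (hxg.mul hxg'), e1, e2]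
    have hgprod : ∀ g g' : K, ((g':Eˣ):E) = ((g:Eˣ):E) * (((g⁻¹*g' : K):Eˣ):E) := by
      intro g g'
      have h1 : g * (g⁻¹ * g') = g' := by group
      have h2 : (((g * (g⁻¹*g') : K):Eˣ):E) = ((g':Eˣ):E) := by rw [h1]
      rw [← h2]
      exact hval g (g⁻¹*g')
    have hdir1 : ∀ g g' : K, g⁻¹ * g' ∈ Hc.subgroupOf K → ψ g = ψ g' := by
      intro g g' hmem
      have hd := (hH'mem _).mp hmem
      obtain ⟨hc1eq, hc2eq⟩ := hmulcoef g (g⁻¹*g') g' (hgprod g g')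
      have hφ1 := congrArg φ hc1eq
      have hφ2 := congrArg φ hc2eq
      simp only [map_add, map_mul, map_natCast] at hφ1 hφ2
      have hφt : φ (c2 _ (hKm (g⁻¹*g'))) = 0 := (hker _).mpr hd
      rw [hkey, hφ1, hφ2, hφt]
      ring
    have hdir2 : ∀ g g' : K, ψ g = ψ g' → g⁻¹ * g' ∈ Hc.subgroupOf K := by
      intro g g' hpsi
      rw [hkey] at hpsi
      obtain ⟨hc1eq, hc2eq⟩ := hmulcoef g (g⁻¹*g') g' (hgprod g g')
      have hφ1 := congrArg φ hc1eq
      have hφ2 := congrArg φ hc2eq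
      simp only [map_add, map_mul, map_natCast] at hφ1 hφ2
      set D : ℤ_[p] := c1 _ (hKm g) * c1 _ (hKm g) +
          (p:ℤ_[p]) * (c1 _ (hKm g) * c2 _ (hKm g) * f - c2 _ (hKm g) * c2 _ (hKm g) * e)
        with hDdef
      have hD : IsUnit D := hUnitAdd _ _ ((hxK g).mul (hxK g)) ⟨_, rfl⟩
      have htD : φ (c2 _ (hKm (g⁻¹*g'))) * φ D = 0 := by
        rw [hDdef]
        simp only [map_add, map_mul, map_sub, map_natCast]
        linear_combination (φ (c2 _ (hKm g))) * hφ1 - (φ (c1 _ (hKm g))) * hφ2 - hpsi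
      have ht0 : φ (c2 _ (hKm (g⁻¹*g'))) = 0 := by
        obtain ⟨C, hC⟩ := (hD.map φ).exists_right_inv
        calc φ (c2 _ (hKm (g⁻¹*g'))) = φ (c2 _ (hKm (g⁻¹*g'))) * (φ D * C) := by
              rw [hC, mul_one]
          _ = (φ (c2 _ (hKm (g⁻¹*g'))) * φ D) * C := by ring
          _ = 0 := by rw [htD, zero_mul]
      exact (hH'mem _).mpr ((hker _).mp ht0)
    let F : (K ⧸ Hc.subgroupOf K) → ZMod (p^i) :=
      Quotient.lift ψ (fun g g' hr => hdir1 g g' ((QuotientGroup.leftRel_apply).mp hr))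
    have hFinj : Function.Injective F := by
      intro q q'
      induction q using Quotient.inductionOn with | _ g =>
      induction q' using Quotient.inductionOn with | _ g' =>
      intro h
      exact Quotient.sound ((QuotientGroup.leftRel_apply).mpr (hdir2 g g' h))
    have hFsurj : Function.Surjective F := by
      intro cz
      obtain ⟨w, hw, hweq⟩ := hInv 1 ((cz.val : ℕ) : ℤ_[p]) isUnit_one
      let G : Eˣ := Units.mkOfMulEqOne _ w hweq
      have hGval : (G:E) = algebraMap ℤ_[p] E 1 +
          algebraMap ℤ_[p] E ((cz.val : ℕ) : ℤ_[p]) * θ := rfl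
      have hGinv : ((G⁻¹:Eˣ):E) = w := by
        rw [Units.val_inv_eq_inv_val]
        exact inv_eq_of_mul_eq_one_right hweq
      have hGK : G ∈ K := ⟨by rw [hGval]; exact add_mem (hZR 1) (mul_mem (hZR _) hθR),
        by rw [hGinv]; exact hw⟩
      refine ⟨QuotientGroup.mk (⟨G, hGK⟩ : K), ?_⟩
      have hcoe := hUniqZ (c1 _ (hKm ⟨G, hGK⟩)) (c2 _ (hKm ⟨G, hGK⟩)) 1 ((cz.val : ℕ) : ℤ_[p])
        (by rw [← hc _ (hKm ⟨G, hGK⟩)]; exact hGval)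
      show φ (c2 _ (hKm ⟨G, hGK⟩)) * Ring.inverse (φ (c1 _ (hKm ⟨G, hGK⟩))) = cz
      rw [hcoe.1, hcoe.2, map_one, Ring.inverse_one, mul_one, map_natCast,
        ZMod.natCast_val, ZMod.cast_id]
    have hcardq : Nat.card (K ⧸ Hc.subgroupOf K) = p^i := by
      rw [Nat.card_eq_of_bijective F ⟨hFinj, hFsurj⟩, Nat.card_zmod]
    show (Hc.subgroupOf (OEUnits p E)).index = p^i
    rw [Subgroup.index_eq_card]
    exact hcardq
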